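/- Let H be an Arf numerical semigroup and let {g₁, …, g_t} ⊆ SG(H) be a finite set of special gaps of H. The following are equivalent: (1) H is maximal, with respect to set inclusion, in the set of all Arf numerical semigroups S with S ∩ {g₁, …, g_t} = ∅; (2) ArfG(H) ⊆ {g₁, …, g_t}. -/

import Mathlib

/-- A numerical semigroup: a subset of ℕ containing 0, closed under addition,
with finite complement. -/
def IsNumericalSemigroup (H : Set ℕ) : Prop :=
  0 ∈ H ∧ (∀ a ∈ H, ∀ b ∈ H, a + b ∈ H) ∧ (Hᶜ : Set ℕ).Finite

/-- An Arf numerical semigroup: for all a ≥ b ≥ c in H, a + b - c ∈ H. -/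
def IsArfSemigroup (H : Set ℕ) : Prop :=
  IsNumericalSemigroup H ∧
    ∀ a ∈ H, ∀ b ∈ H, ∀ c ∈ H, c ≤ b → b ≤ a → a + b - c ∈ H

/-- The special gaps of H. -/
def SpecialGaps (H : Set ℕ) : Set ℕ :=
  {x | x ∉ H ∧ IsNumericalSemigroup (H ∪ {x})}

/-- The Arf special gaps of H. -/
def ArfSpecialGaps (H : Set ℕ) : Set ℕ :=
  {x | x ∉ H ∧ IsArfSemigroup (H ∪ {x})}

/-- The Frobenius number of H (the largest gap; meaningful when H ≠ ℕ). -/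
noncomputable def Frobenius (H : Set ℕ) : ℕ := sSup Hᶜ

/-- An irreducible numerical semigroup. -/
def IsIrreducibleNS (H : Set ℕ) : Prop :=
  IsNumericalSemigroup H ∧
    ¬ ∃ H₁ H₂ : Set ℕ, IsNumericalSemigroup H₁ ∧ IsNumericalSemigroup H₂ ∧
      H ⊂ H₁ ∧ H ⊂ H₂ ∧ H = H₁ ∩ H₂

/-- An Arf-irreducible numerical semigroup. -/
def ArfIrreducible (H : Set ℕ) : Prop :=
  IsArfSemigroup H ∧
    ¬ ∃ H₁ H₂ : Set ℕ, IsArfSemigroup H₁ ∧ IsArfSemigroup H₂ ∧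
      H ⊂ H₁ ∧ H ⊂ H₂ ∧ H = H₁ ∩ H₂

/-- The set of Arf numerical semigroups containing H. -/
def ArfOver (H : Set ℕ) : Set (Set ℕ) := {S | IsArfSemigroup S ∧ H ⊆ S}

/-- The set of Arf-irreducible numerical semigroups containing H. -/
def QA (H : Set ℕ) : Set (Set ℕ) := {S | ArfIrreducible S ∧ H ⊆ S}

/-- A variety of numerical semigroups. -/
def IsVariety (Ψ : Set (Set ℕ)) : Prop :=
  Ψ.Nonempty ∧ (∀ S ∈ Ψ, IsNumericalSemigroup S) ∧
    (∀ S ∈ Ψ, ∀ S' : Set ℕ, IsNumericalSemigroup S' → S ⊆ S' → S' ∈ Ψ) ∧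
    (∀ S ∈ Ψ, ∀ S' ∈ Ψ, S ∩ S' ∈ Ψ)

/-- The variety generated by a family of numerical semigroups. -/
def GeneratedVariety (F : Set (Set ℕ)) : Set (Set ℕ) :=
  ⋂₀ {Ψ | IsVariety Ψ ∧ F ⊆ Ψ}

/-- For an Arf numerical semigroup H and a finite set {g₁,…,g_t} of special gaps of H:
H is maximal among Arf numerical semigroups avoiding {g₁,…,g_t} iff ArfG(H) ⊆ {g₁,…,g_t}. -/
theorem maximal_iff_arfSpecialGaps_subset (H : Set ℕ) (hH : IsArfSemigroup H)
    (G : Finset ℕ) (hG : ↑G ⊆ SpecialGaps H) :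
    (∀ S : Set ℕ, IsArfSemigroup S → (∀ g ∈ G, g ∉ S) → H ⊆ S → S = H) ↔
      ArfSpecialGaps H ⊆ ↑G := by
  constructor
  · intro hmax x hx
    obtain ⟨hxH, hArf⟩ := hx
    by_contra hxG
    have heq := hmax (H ∪ {x}) hArf ?_ Set.subset_union_left
    · exact hxH (heq ▸ (Set.mem_union_right _ rfl : x ∈ H ∪ {x}))
    · intro g hg hmem
      rcases hmem with h1 | h2
      · exact (hG hg).1 h1
      · exact hxG (h2 ▸ hg)
  · intro hsub S hS hav hHS
    by_contra hne
    have hdiff : (S \ H).Nonempty := by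
      rw [Set.nonempty_iff_ne_empty, Ne, Set.diff_eq_empty]
      intro hSH
      exact hne (Set.Subset.antisymm hSH hHS)
    have hfin : (S \ H).Finite := hH.1.2.2.subset (fun y hy => hy.2)
    obtain ⟨x, hxmem, hxmax⟩ := Set.Finite.exists_maximalFor id _ hfin hdiff
    have hxmax' : ∀ y ∈ S \ H, y ≤ x := by
      intro y hy
      by_contra hlt
      push_neg at hlt
      have h2 := hxmax hy (le_of_lt hlt)
      simp only [id_eq] at h2
      omega
    obtain ⟨hxS, hxH⟩ := hxmem
    have hx0 : 0 < x := by
      rcases Nat.eq_zero_or_pos x with h | h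
      · exact absurd (h ▸ hH.1.1) hxH
      · exact h
    have key : ∀ d, d ∈ S → x ≤ d → d ∈ H ∪ {x} := by
      intro d hd hxd
      by_cases h : d ∈ H
      · exact Or.inl h
      · exact Or.inr (le_antisymm (hxmax' d ⟨hd, h⟩) hxd)
    have hsub' : H ∪ {x} ⊆ S := Set.union_subset hHS (Set.singleton_subset_iff.mpr hxS)
    have hNS : IsNumericalSemigroup (H ∪ {x}) := by
      refine ⟨Or.inl hH.1.1, ?_, hH.1.2.2.subset ?_⟩
      · intro a ha b hb
        rcases ha with ha | ha <;> rcases hb with hb | hb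
        · exact Or.inl (hH.1.2.1 a ha b hb)
        · rcases Nat.eq_zero_or_pos a with h0 | h0
          · subst h0; rw [Nat.zero_add]; exact Or.inr hb
          · have hmem : a + b ∈ S := hS.1.2.1 a (hHS ha) b (hsub' (Or.inr hb))
            exact key _ hmem (by simp only [Set.mem_singleton_iff] at hb; omega)
        · rcases Nat.eq_zero_or_pos b with h0 | h0
          · subst h0; rw [Nat.add_zero]; exact Or.inr ha
          · have hmem : a + b ∈ S := hS.1.2.1 a (hsub' (Or.inr ha)) b (hHS hb)
            exact key _ hmem (by simp only [Set.mem_singleton_iff] at ha; omega)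
        · have hmem : a + b ∈ S :=
            hS.1.2.1 a (hsub' (Or.inr ha)) b (hsub' (Or.inr hb))
          simp only [Set.mem_singleton_iff] at ha hb
          exact key _ hmem (by omega)
      · intro y hy
        simp only [Set.mem_compl_iff, Set.mem_union] at hy ⊢
        exact fun h => hy (Or.inl h)
    have hArf : IsArfSemigroup (H ∪ {x}) := by
      refine ⟨hNS, ?_⟩
      intro a ha b hb c hc hcb hba
      have hmem : a + b - c ∈ S :=
        hS.2 a (hsub' ha) b (hsub' hb) c (hsub' hc) hcb hba
      rcases ha with ha | ha
      · rcases hb with hb | hb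
        · rcases hc with hc | hc
          · exact Or.inl (hH.2 a ha b hb c hc hcb hba)
          · -- c = x, a b ∈ H
            simp only [Set.mem_singleton_iff] at hc
            exact key _ hmem (by omega)
        · -- b = x
          simp only [Set.mem_singleton_iff] at hb
          exact key _ hmem (by omega)
      · -- a = x
        simp only [Set.mem_singleton_iff] at ha
        exact key _ hmem (by omega)
    have hxG : x ∈ G := hsub ⟨hxH, hArf⟩
    exact hav x hxG hxS
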